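/- Let Φ be a root system with simple system Δ and fix α ∈ Δ. Let m_α = max over λ ∈ Φ of the coefficient of α in λ, let Φ_α = {λ ∈ Φ : coefficient of α in λ equals m_α}, and χ_α = Σ_{λ ∈ Φ_α} λ. Then there exists c > 0 such that for every β ∈ Δ, ⟨χ_α, β⟩ = c·δ_{β,α}. -/

import Mathlib

open scoped RealInnerProductSpace BigOperators

/-- The reflection in the (nonzero) vector `l` of a real inner product space:
`ω_l (x) = x - (2⟨x,l⟩/⟨l,l⟩) l`. -/
noncomputable def rsRefl {E : Type*} [NormedAddCommGroup E] [InnerProductSpace ℝ E]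
    (l x : E) : E :=
  x - (2 * ⟪x, l⟫ / ⟪l, l⟫) • l

variable {E : Type*} [NormedAddCommGroup E] [InnerProductSpace ℝ E]

lemma rsRefl_invol (l μ : E) (hl : ⟪l, l⟫ ≠ 0) : rsRefl l (rsRefl l μ) = μ := by
  simp only [rsRefl, inner_sub_left, real_inner_smul_left]
  rw [sub_sub, ← add_smul]
  have : 2 * ⟪μ, l⟫ / ⟪l, l⟫ + 2 * (⟪μ, l⟫ - 2 * ⟪μ, l⟫ / ⟪l, l⟫ * ⟪l, l⟫) / ⟪l, l⟫ = 0 := by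
    field_simp
    ring
  rw [this, zero_smul, sub_zero]

/-- Let `Φ` be a root system with simple system `α₁, …, α_r` and fix a simple
root `αᵢ`.  Let `m_{αᵢ}` be the maximal coefficient of `αᵢ` occurring among all roots,
`Φ_{αᵢ}` the set of roots attaining it, and `χ_{αᵢ}` their sum.  Then there exists `c > 0`
such that `⟨χ_{αᵢ}, α_j⟩ = c · δ_{ij}` for every `j`. -/
theorem stmt6 {r : ℕ} (Φ : Finset E)
    (h0 : (0 : E) ∉ Φ)
    (hrefl : ∀ l ∈ Φ, ∀ μ ∈ Φ, rsRefl l μ ∈ Φ)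
    (hint : ∀ l ∈ Φ, ∀ μ ∈ Φ, ∃ z : ℤ, 2 * ⟪μ, l⟫ / ⟪l, l⟫ = (z : ℝ))
    (α : Fin r → E) (hα : ∀ i, α i ∈ Φ) (hli : LinearIndependent ℝ α)
    (m : E → Fin r → ℤ)
    (hexp : ∀ l ∈ Φ, l = ∑ j : Fin r, (m l j : ℝ) • α j)
    (hsign : ∀ l ∈ Φ, (∀ j, 0 ≤ m l j) ∨ (∀ j, m l j ≤ 0))
    (i : Fin r) :
    ∃ c : ℝ, 0 < c ∧ ∀ j : Fin r,
      ⟪∑ l ∈ Φ.filter (fun l => m l i = Φ.sup' ⟨α i, hα i⟩ (fun l => m l i)), l, α j⟫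
        = if j = i then c else 0 := by
  classical
  set M : ℤ := Φ.sup' ⟨α i, hα i⟩ (fun l => m l i) with hM
  set S : Finset E := Φ.filter (fun l => m l i = M) with hS
  set χ : E := ∑ l ∈ S, l with hχ
  -- inner products of roots with themselves are nonzero
  have hnn : ∀ l ∈ Φ, ⟪l, l⟫ ≠ 0 := by
    intro l hl h
    exact h0 (by rwa [inner_self_eq_zero.mp h] at hl)
  -- uniqueness of coefficients
  have huniq : ∀ l ∈ Φ, ∀ c : Fin r → ℝ, l = ∑ j, c j • α j → ∀ j, c j = (m l j : ℝ) := by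
    intro l hl c hc j
    have h1 : ∑ k : Fin r, (c k - (m l k : ℝ)) • α k = 0 := by
      simp only [sub_smul, Finset.sum_sub_distrib]
      rw [← hc, ← hexp l hl, sub_self]
    have h2 := Fintype.linearIndependent_iff.mp hli _ h1 j
    linarith [h2]
  -- coefficients of simple roots
  have hmα : ∀ k j : Fin r, (m (α k) j : ℝ) = if j = k then 1 else 0 := by
    intro k j
    refine (huniq (α k) (hα k) (fun j => if j = k then 1 else 0) ?_ j).symm
    simp [ite_smul]
  have hM1 : 1 ≤ M := by
    have h1 : m (α i) i = 1 := by
      have := hmα i i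
      simp at this
      exact_mod_cast this
    have := Finset.le_sup' (fun l => m l i) (hα i)
    omega
  -- S is nonempty
  obtain ⟨l₀, hl₀, hl₀M⟩ := Finset.exists_mem_eq_sup' (⟨α i, hα i⟩ : Φ.Nonempty)
    (fun l => m l i)
  have hSne : S.Nonempty := ⟨l₀, Finset.mem_filter.mpr ⟨hl₀, hl₀M.symm⟩⟩
  -- the reflection in α j for j ≠ i preserves S
  have hperp : ∀ j : Fin r, j ≠ i → ⟪χ, α j⟫ = 0 := by
    intro j hj
    have hmem : ∀ l ∈ S, rsRefl (α j) l ∈ S := by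
      intro l hlS
      have hlΦ : l ∈ Φ := (Finset.mem_filter.mp hlS).1
      have hlM : m l i = M := (Finset.mem_filter.mp hlS).2
      obtain ⟨z, hz⟩ := hint (α j) (hα j) l hlΦ
      have hr : rsRefl (α j) l ∈ Φ := hrefl (α j) (hα j) l hlΦ
      have hco : rsRefl (α j) l
          = ∑ k, (((m l k : ℝ) - if k = j then (z : ℝ) else 0)) • α k := by
        rw [rsRefl, hz]
        conv_lhs => rw [hexp l hlΦ]
        simp only [sub_smul, Finset.sum_sub_distrib]
        congr 1
        simp [ite_smul]
      have h3 := huniq _ hr _ hco i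
      have h4 : (m l i : ℝ) = (m (rsRefl (α j) l) i : ℝ) := by
        rw [← h3, if_neg (by simpa using (Ne.symm hj)), sub_zero]
      have h5 : m (rsRefl (α j) l) i = M := by
        rw [← hlM]; exact_mod_cast h4.symm
      exact Finset.mem_filter.mpr ⟨hr, h5⟩
    have hsum : ∑ l ∈ S, rsRefl (α j) l = ∑ l ∈ S, l := by
      refine Finset.sum_bij' (fun l _ => rsRefl (α j) l) (fun l _ => rsRefl (α j) l)
        hmem hmem ?_ ?_ ?_
      · intro a ha; exact rsRefl_invol _ _ (hnn _ (hα j))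
      · intro a ha; exact rsRefl_invol _ _ (hnn _ (hα j))
      · intro a ha; rfl
    have hlin : ∑ l ∈ S, rsRefl (α j) l = χ - (2 * ⟪χ, α j⟫ / ⟪α j, α j⟫) • α j := by
      simp only [rsRefl, Finset.sum_sub_distrib]
      congr 1
      rw [hχ, sum_inner, ← Finset.sum_smul]
      congr 1
      rw [Finset.mul_sum, Finset.sum_div]
    rw [hlin, ← hχ] at hsum
    have ht : (2 * ⟪χ, α j⟫ / ⟪α j, α j⟫) • α j = 0 := by
      have := sub_eq_self.mp hsum
      exact this
    rcases smul_eq_zero.mp ht with h | h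
    · have hc := hnn _ (hα j)
      field_simp at h
      linarith
    · exact absurd h (by intro h'; exact h0 (h' ▸ hα j))
  -- χ is nonzero
  have hcardM : (0 : ℝ) < (S.card : ℝ) * (M : ℝ) := by
    have h1 : 0 < S.card := Finset.card_pos.mpr hSne
    have : (1 : ℝ) ≤ (S.card : ℝ) := by exact_mod_cast h1
    have : (1 : ℝ) ≤ (M : ℝ) := by exact_mod_cast hM1
    nlinarith [Finset.card_pos.mpr hSne]
  have hχexp : χ = ∑ k, (∑ l ∈ S, (m l k : ℝ)) • α k := by
    rw [hχ]
    rw [Finset.sum_congr rfl (fun l hl => hexp l (Finset.mem_filter.mp hl).1)]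
    rw [Finset.sum_comm]
    simp [Finset.sum_smul]
    rfl
  have hchi_ne : χ ≠ 0 := by
    intro h
    rw [hχexp] at h
    have h2 := Fintype.linearIndependent_iff.mp hli _ h i
    have h3 : ∑ l ∈ S, (m l i : ℝ) = (S.card : ℝ) * (M : ℝ) := by
      rw [Finset.sum_congr rfl (fun l hl => by
        rw [(Finset.mem_filter.mp hl).2])]
      simp [mul_comm]
    rw [h3] at h2
    exact absurd h2 (ne_of_gt hcardM)
  have hpos : 0 < ⟪χ, χ⟫ := by
    rw [real_inner_self_eq_norm_sq]
    have := norm_pos_iff.mpr hchi_ne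
    positivity
  have hterm : ∀ l ∈ S, ⟪χ, l⟫ = (M : ℝ) * ⟪χ, α i⟫ := by
    intro l hl
    conv_lhs => rw [hexp l (Finset.mem_filter.mp hl).1]
    rw [inner_sum]
    rw [Finset.sum_eq_single i (fun k _ hk => by
      rw [real_inner_smul_right, hperp k hk, mul_zero]) (by simp)]
    rw [real_inner_smul_right, (Finset.mem_filter.mp hl).2]
  have hinner : ⟪χ, χ⟫ = (S.card : ℝ) * (M : ℝ) * ⟪χ, α i⟫ := by
    nth_rewrite 2 [hχ]
    rw [inner_sum, Finset.sum_congr rfl hterm, Finset.sum_const, nsmul_eq_mul, mul_assoc]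
  refine ⟨⟪χ, α i⟫, ?_, ?_⟩
  · nlinarith [hpos, hinner, hcardM]
  · intro j
    by_cases hj : j = i
    · subst hj; simp
    · simp [hj, hperp j hj]
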